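/- Any closed spherical curve of length less than 2π lies in an open hemisphere of S². -/

import Mathlib

open scoped ENNReal

open Real InnerProductGeometry
open scoped RealInnerProductSpace

variable {V : Type*} [NormedAddCommGroup V] [InnerProductSpace ℝ V]

lemma myArccos_le_arccos {u v : ℝ} (h : u ≤ v) : Real.arccos v ≤ Real.arccos u := by
  rw [Real.arccos, Real.arccos]
  have := Real.monotone_arcsin h
  linarith

lemma unit_angle_eq {x y : V} (hx : ‖x‖ = 1) (hy : ‖y‖ = 1) :
    angle x y = Real.arccos ⟪x, y⟫ := by
  rw [angle, hx, hy]; norm_num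

lemma unit_cos_angle {x y : V} (hx : ‖x‖ = 1) (hy : ‖y‖ = 1) :
    Real.cos (angle x y) = ⟪x, y⟫ := by
  rw [cos_angle, hx, hy]; norm_num

lemma unit_sin_angle {x y : V} (hx : ‖x‖ = 1) (hy : ‖y‖ = 1) :
    Real.sin (angle x y) = Real.sqrt (1 - ⟪x, y⟫ ^ 2) := by
  rw [unit_angle_eq hx hy, Real.sin_arccos]

lemma unit_angle_triangle {x y z : V} (hx : ‖x‖ = 1) (hy : ‖y‖ = 1) (hz : ‖z‖ = 1) :
    angle x z ≤ angle x y + angle y z := by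
  by_cases hp : π ≤ angle x y + angle y z
  · exact (angle_le_pi x z).trans hp
  push_neg at hp
  set u : V := x - ⟪x, y⟫ • y with hu
  set w : V := z - ⟪z, y⟫ • y with hw
  have hyy : ⟪y, y⟫ = (1:ℝ) := by
    rw [real_inner_self_eq_norm_sq, hy]; norm_num
  have huw : ⟪u, w⟫ = ⟪x, z⟫ - ⟪x, y⟫ * ⟪z, y⟫ := by
    simp only [hu, hw, inner_sub_left, inner_sub_right, real_inner_smul_left,
      real_inner_smul_right, hyy]
    rw [real_inner_comm y z]
    ring
  have hnu : ‖u‖ = Real.sqrt (1 - ⟪x, y⟫ ^ 2) := by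
    have h2 : ‖u‖ ^ 2 = 1 - ⟪x, y⟫ ^ 2 := by
      rw [← real_inner_self_eq_norm_sq]
      simp only [hu, inner_sub_left, inner_sub_right, real_inner_smul_left,
        real_inner_smul_right, hyy]
      rw [real_inner_comm y x, real_inner_self_eq_norm_sq, hx]
      ring
    rw [← h2, Real.sqrt_sq (norm_nonneg u)]
  have hnw : ‖w‖ = Real.sqrt (1 - ⟪z, y⟫ ^ 2) := by
    have h2 : ‖w‖ ^ 2 = 1 - ⟪z, y⟫ ^ 2 := by
      rw [← real_inner_self_eq_norm_sq]
      simp only [hw, inner_sub_left, inner_sub_right, real_inner_smul_left,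
        real_inner_smul_right, hyy]
      rw [real_inner_comm y z, real_inner_self_eq_norm_sq, hz]
      ring
    rw [← h2, Real.sqrt_sq (norm_nonneg w)]
  have hCS : -(‖u‖ * ‖w‖) ≤ ⟪u, w⟫ := neg_le_of_abs_le (abs_real_inner_le_norm u w)
  have hcos : Real.cos (angle x y + angle y z) ≤ ⟪x, z⟫ := by
    rw [Real.cos_add, unit_cos_angle hx hy, unit_cos_angle hy hz,
      unit_sin_angle hx hy, unit_sin_angle hy hz]
    have : Real.sqrt (1 - ⟪x, y⟫ ^ 2) * Real.sqrt (1 - ⟪y, z⟫ ^ 2) = ‖u‖ * ‖w‖ := by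
      rw [hnu, hnw, real_inner_comm z y]
    rw [this]
    have := hCS
    rw [huw] at this
    rw [real_inner_comm y z] at this
    linarith
  have h0 : 0 ≤ angle x y + angle y z :=
    add_nonneg (angle_nonneg x y) (angle_nonneg y z)
  calc angle x z = Real.arccos ⟪x, z⟫ := unit_angle_eq hx hz
    _ ≤ Real.arccos (Real.cos (angle x y + angle y z)) := myArccos_le_arccos hcos
    _ = angle x y + angle y z := Real.arccos_cos h0 hp.le

lemma arcsin_ratio {u v : ℝ} (hu : 0 ≤ u) (huv : u ≤ v) (hv : v ≤ 1) :
    v * Real.arcsin u ≤ u * Real.arcsin v := by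
  rcases eq_or_lt_of_le (hu.trans huv) with h0 | h0
  · have hv0 : v = 0 := h0.symm
    have hu0 : u = 0 := le_antisymm (hv0 ▸ huv) hu
    simp [hv0, hu0]
  set t : ℝ := u / v with ht
  have ht0 : 0 ≤ t := div_nonneg hu h0.le
  have ht1 : t ≤ 1 := (div_le_one h0).2 huv
  set θ : ℝ := Real.arcsin v with hθ
  have hθ0 : 0 ≤ θ := Real.arcsin_nonneg.2 (hu.trans huv)
  have hθπ : θ ≤ π / 2 := Real.arcsin_le_pi_div_two v
  have hsin : t * Real.sin θ ≤ Real.sin (t * θ) := by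
    have hmem0 : (0:ℝ) ∈ Set.Icc 0 π := ⟨le_rfl, Real.pi_pos.le⟩
    have hmemθ : θ ∈ Set.Icc 0 π := ⟨hθ0, hθπ.trans (by linarith [Real.pi_pos])⟩
    have := strictConcaveOn_sin_Icc.concaveOn.2 hmem0 hmemθ
      (show (0:ℝ) ≤ 1 - t by linarith) ht0 (show (1 - t) + t = 1 by ring)
    simp only [smul_eq_mul, Real.sin_zero, mul_zero, add_zero, zero_add] at this
    linarith
  have hsv : Real.sin θ = v := Real.sin_arcsin (by linarith) hv
  have huv' : u = t * v := (div_mul_cancel₀ u h0.ne').symm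
  have key : Real.arcsin u ≤ t * θ := by
    calc Real.arcsin u = Real.arcsin (t * Real.sin θ) := by rw [hsv, ← huv']
      _ ≤ Real.arcsin (Real.sin (t * θ)) := Real.monotone_arcsin hsin
      _ = t * θ := Real.arcsin_sin (by nlinarith [Real.pi_pos]) (by nlinarith)
  calc v * Real.arcsin u ≤ v * (t * θ) := by
        exact mul_le_mul_of_nonneg_left key h0.le
    _ = u * θ := by rw [huv']; ring

lemma unit_angle_eq_arcsin {x y : V} (hx : ‖x‖ = 1) (hy : ‖y‖ = 1) :
    angle x y = 2 * Real.arcsin (‖x - y‖ / 2) := by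
  set c : ℝ := ‖x - y‖ / 2 with hc
  have hc0 : 0 ≤ c := by positivity
  have hc1 : c ≤ 1 := by
    have := norm_sub_le x y
    rw [hx, hy] at this
    simp only [hc]
    linarith
  have hinner : ⟪x, y⟫ = 1 - 2 * c ^ 2 := by
    have h1 : ‖x - y‖ ^ 2 = ‖x‖ ^ 2 - 2 * ⟪x, y⟫ + ‖y‖ ^ 2 := norm_sub_sq_real x y
    rw [hx, hy] at h1
    have h2 : ‖x - y‖ = 2 * c := by rw [hc]; ring
    rw [h2] at h1
    nlinarith
  have hasin : Real.sin (Real.arcsin c) = c := Real.sin_arcsin (by linarith) hc1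
  have hcos : Real.cos (2 * Real.arcsin c) = 1 - 2 * c ^ 2 := by
    rw [Real.cos_two_mul]
    have := Real.sin_sq_add_cos_sq (Real.arcsin c)
    nlinarith
  rw [unit_angle_eq hx hy, hinner, ← hcos]
  have ha0 : 0 ≤ Real.arcsin c := Real.arcsin_nonneg.2 hc0
  exact Real.arccos_cos (by linarith) (by linarith [Real.arcsin_le_pi_div_two c])

lemma unit_angle_le_K {x y : V} (hx : ‖x‖ = 1) (hy : ‖y‖ = 1) {δ : ℝ}
    (hδ0 : 0 < δ) (hδ2 : δ ≤ 2) (h : ‖x - y‖ ≤ δ) :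
    angle x y ≤ (2 * Real.arcsin (δ / 2) / δ) * ‖x - y‖ := by
  rw [unit_angle_eq_arcsin hx hy]
  have h1 : (δ / 2) * Real.arcsin (‖x - y‖ / 2) ≤ (‖x - y‖ / 2) * Real.arcsin (δ / 2) :=
    arcsin_ratio (by positivity) (by linarith) (by linarith)
  rw [div_mul_eq_mul_div, le_div_iff₀ hδ0]
  nlinarith

lemma angle_chain {q : ℕ → V} (hq : ∀ i, ‖q i‖ = 1) (n : ℕ) :
    angle (q 0) (q n) ≤ ∑ i ∈ Finset.range n, angle (q i) (q (i + 1)) := by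
  induction n with
  | zero =>
    have h0 : q 0 ≠ 0 := by
      intro h; have := hq 0; rw [h] at this; simp at this
    simp [angle_self h0]
  | succ n ih =>
    calc angle (q 0) (q (n + 1)) ≤ angle (q 0) (q n) + angle (q n) (q (n + 1)) :=
          unit_angle_triangle (hq 0) (hq n) (hq (n + 1))
      _ ≤ _ := by rw [Finset.sum_range_succ]; linarith

lemma reflect_pi_le {a b x : V} (ha : ‖a‖ = 1) (hb : ‖b‖ = 1) (hx : ‖x‖ = 1)
    (h : ⟪x, a + b⟫ = 0) : π ≤ angle a x + angle x b := by
  have hxne : x ≠ 0 := by intro h'; rw [h'] at hx; simp at hx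
  have hnx : ‖-x‖ = 1 := by rwa [norm_neg]
  have hinner : ⟪-x, a⟫ = ⟪x, b⟫ := by
    rw [inner_add_right] at h
    rw [inner_neg_left]
    linarith
  have h1 : angle (-x) a = angle x b := by
    rw [unit_angle_eq hnx ha, unit_angle_eq hx hb, hinner]
  have h2 : π = angle x (-x) := (angle_self_neg_of_nonzero hxne).symm
  calc π = angle x (-x) := h2
    _ ≤ angle x a + angle a (-x) := unit_angle_triangle hx ha hnx
    _ = angle a x + angle x b := by rw [angle_comm x a, angle_comm a (-x), h1]

lemma exists_delta {c : ℝ} (hc : 1 < c) :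
    ∃ δ : ℝ, 0 < δ ∧ δ ≤ 2 ∧ 2 * Real.arcsin (δ / 2) / δ < c := by
  have hderiv : HasDerivAt Real.arcsin 1 0 := by
    have := Real.hasDerivAt_arcsin (by norm_num : (0:ℝ) ≠ -1) (by norm_num : (0:ℝ) ≠ 1)
    simpa using this
  have hslope : Filter.Tendsto (slope Real.arcsin 0) (nhdsWithin 0 {(0:ℝ)}ᶜ) (nhds 1) :=
    hasDerivAt_iff_tendsto_slope.1 hderiv
  have hslope' : Filter.Tendsto (slope Real.arcsin 0) (nhdsWithin 0 (Set.Ioi 0)) (nhds 1) :=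
    hslope.mono_left (nhdsWithin_mono 0 (fun x hx => ne_of_gt hx))
  have hev : ∀ᶠ d in nhdsWithin 0 (Set.Ioi 0), slope Real.arcsin 0 d < c :=
    hslope'.eventually_lt_const hc
  have hev2 : Set.Ioo (0:ℝ) 1 ∈ nhdsWithin 0 (Set.Ioi 0) :=
    Ioo_mem_nhdsGT_of_mem ⟨le_rfl, zero_lt_one⟩
  obtain ⟨d, hd1, hd2⟩ := (hev.and (Filter.eventually_of_mem hev2 (fun x hx => hx))).exists
  refine ⟨2 * d, by linarith [hd2.1], by linarith [hd2.2], ?_⟩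
  have hd0 : (0:ℝ) < d := hd2.1
  have : slope Real.arcsin 0 d = Real.arcsin d / d := by
    rw [slope_def_field]
    simp
  rw [this] at hd1
  have h2 : 2 * Real.arcsin (2 * d / 2) / (2 * d) = Real.arcsin d / d := by
    have : 2 * d / 2 = d := by ring
    rw [this]
    field_simp
  rw [h2]
  exact hd1

lemma exists_delta' {B C : ℝ} (hB : 0 ≤ B) (hBC : B < C) :
    ∃ δ : ℝ, 0 < δ ∧ δ ≤ 2 ∧ (2 * Real.arcsin (δ / 2) / δ) * B < C := by
  rcases eq_or_lt_of_le hB with h0 | h0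
  · exact ⟨2, two_pos, le_rfl, by rw [← h0, mul_zero]; linarith⟩
  · obtain ⟨δ, h1, h2, h3⟩ := exists_delta ((one_lt_div h0).2 hBC)
    exact ⟨δ, h1, h2, (lt_div_iff₀ h0).1 h3⟩

lemma key_angle_le {γ : ℝ → V} {η δ : ℝ} (hδ0 : 0 < δ) (hδ2 : δ ≤ 2)
    (hsph : ∀ t ∈ Set.Icc (0:ℝ) 1, ‖γ t‖ = 1)
    (hfin : eVariationOn γ (Set.Icc (0:ℝ) 1) ≠ ⊤)
    (hη : 0 < η)
    (hUC : ∀ a ∈ Set.Icc (0:ℝ) 1, ∀ b ∈ Set.Icc (0:ℝ) 1, dist a b < η → dist (γ a) (γ b) < δ)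
    {u v : ℝ} (hu : 0 ≤ u) (huv : u ≤ v) (hv : v ≤ 1) :
    angle (γ u) (γ v) ≤ (2 * Real.arcsin (δ / 2) / δ) * (eVariationOn γ (Set.Icc u v)).toReal := by
  set K : ℝ := 2 * Real.arcsin (δ / 2) / δ with hKdef
  have hK0 : 0 ≤ K := by
    have harc : 0 ≤ Real.arcsin (δ / 2) := Real.arcsin_nonneg.2 (by linarith)
    rw [hKdef]
    positivity
  have hsubfin : eVariationOn γ (Set.Icc u v) ≠ ⊤ :=
    ne_top_of_le_ne_top hfin (eVariationOn.mono γ (Set.Icc_subset_Icc hu hv))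
  rcases eq_or_lt_of_le huv with heq | hlt
  · subst heq
    have hne : γ u ≠ 0 := by
      intro h; have := hsph u ⟨hu, hv⟩; rw [h] at this; simp at this
    rw [angle_self hne]
    positivity
  set n : ℕ := ⌈(v - u) / η⌉₊ + 1 with hn
  have hn0 : (0:ℝ) < (n:ℝ) := by positivity
  set step : ℝ := (v - u) / n with hstepdef
  have hstep0 : 0 ≤ step := div_nonneg (by linarith) hn0.le
  have hstepη : step < η := by
    rw [hstepdef, div_lt_iff₀ hn0]
    have h1 : (v - u) / η ≤ (⌈(v - u) / η⌉₊ : ℝ) := Nat.le_ceil _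
    have h2 : ((⌈(v - u) / η⌉₊ : ℝ)) < (n:ℝ) := by
      rw [hn]; push_cast; linarith
    have := (div_le_iff₀ hη).1 h1
    nlinarith
  set p : ℕ → ℝ := fun i => u + ((min i n : ℕ) : ℝ) * step with hp
  have pmono : Monotone p := by
    intro i j hij
    have : ((min i n : ℕ) : ℝ) ≤ ((min j n : ℕ) : ℝ) := by
      exact_mod_cast min_le_min hij le_rfl
    simp only [hp]
    nlinarith
  have pmem : ∀ i, p i ∈ Set.Icc u v := by
    intro i
    constructor
    · simp only [hp]
      have := mul_nonneg (show (0:ℝ) ≤ ((min i n : ℕ) : ℝ) by positivity) hstep0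
      linarith
    · simp only [hp]
      have h1 : ((min i n : ℕ) : ℝ) ≤ (n:ℝ) := by exact_mod_cast min_le_right i n
      have h2 : (n:ℝ) * step = v - u := by
        rw [hstepdef]; field_simp
      nlinarith
  have p01 : ∀ i, p i ∈ Set.Icc (0:ℝ) 1 :=
    fun i => ⟨hu.trans (pmem i).1, (pmem i).2.trans hv⟩
  have punit : ∀ i, ‖γ (p i)‖ = 1 := fun i => hsph _ (p01 i)
  have hp0 : p 0 = u := by simp [hp]
  have hpn : p n = v := by
    simp only [hp, min_self]
    rw [hstepdef]
    field_simp
    ring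
  have chain : angle (γ (p 0)) (γ (p n)) ≤
      ∑ i ∈ Finset.range n, angle (γ (p i)) (γ (p (i + 1))) :=
    angle_chain punit n
  have each : ∀ i, angle (γ (p i)) (γ (p (i + 1))) ≤ K * dist (γ (p (i + 1))) (γ (p i)) := by
    intro i
    have hmin : min (i + 1) n ≤ min i n + 1 := by omega
    have hdp : dist (p i) (p (i + 1)) < η := by
      have hle : p (i + 1) - p i ≤ step := by
        have h1 : ((min (i + 1) n : ℕ) : ℝ) ≤ ((min i n : ℕ) : ℝ) + 1 := by exact_mod_cast hmin
        simp only [hp]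
        nlinarith
      have hge : p i ≤ p (i + 1) := pmono (Nat.le_succ i)
      rw [Real.dist_eq, abs_of_nonpos (by linarith)]
      linarith
    have hchord : dist (γ (p i)) (γ (p (i + 1))) < δ := hUC _ (p01 i) _ (p01 (i + 1)) hdp
    have := unit_angle_le_K (punit i) (punit (i + 1)) hδ0 hδ2
      (by rw [← dist_eq_norm]; exact hchord.le)
    rw [← hKdef] at this
    calc angle (γ (p i)) (γ (p (i + 1))) ≤ K * ‖γ (p i) - γ (p (i + 1))‖ := this
      _ = K * dist (γ (p (i + 1))) (γ (p i)) := by rw [← dist_eq_norm, dist_comm]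
  have sumdist : ∑ i ∈ Finset.range n, dist (γ (p (i + 1))) (γ (p i)) ≤
      (eVariationOn γ (Set.Icc u v)).toReal := by
    have evsum := eVariationOn.sum_le (f := γ) (n := n) pmono (fun i => pmem i)
    have h1 : ∑ i ∈ Finset.range n, dist (γ (p (i + 1))) (γ (p i)) =
        (∑ i ∈ Finset.range n, edist (γ (p (i + 1))) (γ (p i))).toReal := by
      rw [ENNReal.toReal_sum (fun i _ => edist_ne_top _ _)]
      simp [dist_edist]
    rw [h1]
    exact ENNReal.toReal_mono hsubfin evsum
  calc angle (γ u) (γ v) = angle (γ (p 0)) (γ (p n)) := by rw [hp0, hpn]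
    _ ≤ ∑ i ∈ Finset.range n, angle (γ (p i)) (γ (p (i + 1))) := chain
    _ ≤ ∑ i ∈ Finset.range n, K * dist (γ (p (i + 1))) (γ (p i)) :=
        Finset.sum_le_sum (fun i _ => each i)
    _ = K * ∑ i ∈ Finset.range n, dist (γ (p (i + 1))) (γ (p i)) := by
        rw [Finset.mul_sum]
    _ ≤ K * (eVariationOn γ (Set.Icc u v)).toReal :=
        mul_le_mul_of_nonneg_left sumdist hK0

lemma unit_angle_le_pi_half {x y : V} (hx : ‖x‖ = 1) (hy : ‖y‖ = 1) :
    angle x y ≤ π / 2 * ‖x - y‖ := by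
  have hc : ‖x - y‖ ≤ 2 := by
    have := norm_sub_le x y; rw [hx, hy] at this; linarith
  have h := unit_angle_le_K hx hy (show (0:ℝ) < 2 by norm_num) le_rfl hc
  have h2 : 2 * Real.arcsin (2 / 2) / 2 = π / 2 := by
    norm_num [Real.arcsin_one]
  rwa [h2] at h

/-- Hemisphere lemma: any closed spherical curve of length less than `2π` lies in an open
hemisphere. -/
theorem closed_spherical_curve_lt_two_pi_in_open_hemisphere
    (γ : ℝ → EuclideanSpace ℝ (Fin 3))
    (hcont : ContinuousOn γ (Set.Icc 0 1))
    (hsph : ∀ t ∈ Set.Icc (0:ℝ) 1, ‖γ t‖ = 1)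
    (hclosed : γ 0 = γ 1)
    (hlen : eVariationOn γ (Set.Icc 0 1) < ENNReal.ofReal (2 * Real.pi)) :
    ∃ z : EuclideanSpace ℝ (Fin 3), ‖z‖ = 1 ∧
      ∀ t ∈ Set.Icc (0:ℝ) 1, 0 < (inner ℝ (γ t) z : ℝ) := by
  have hfin : eVariationOn γ (Set.Icc (0:ℝ) 1) ≠ ⊤ := (hlen.trans ENNReal.ofReal_lt_top).ne
  set L : ℝ := (eVariationOn γ (Set.Icc (0:ℝ) 1)).toReal with hLdef
  have hL2π : L < 2 * π := ENNReal.toReal_lt_of_lt_ofReal hlen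
  have hL0 : 0 ≤ L := ENNReal.toReal_nonneg
  have hLpi : L / 2 < π := by linarith
  set m : ℝ := (L / 2 + π) / 2 with hm
  have hm1 : L / 2 < m := by rw [hm]; linarith
  have hm2 : m < π := by rw [hm]; linarith
  obtain ⟨δ, hδ0, hδ2, hKm⟩ := exists_delta' (by linarith : (0:ℝ) ≤ L / 2) hm1
  set K : ℝ := 2 * Real.arcsin (δ / 2) / δ with hKdef
  have hK0 : 0 ≤ K := by
    have harc : 0 ≤ Real.arcsin (δ / 2) := Real.arcsin_nonneg.2 (by linarith)
    rw [hKdef]; positivity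
  obtain ⟨η, hη, hUC⟩ := Metric.uniformContinuousOn_iff.1
    (isCompact_Icc.uniformContinuousOn_of_continuous hcont) δ hδ0
  have key : ∀ u v : ℝ, 0 ≤ u → u ≤ v → v ≤ 1 →
      InnerProductGeometry.angle (γ u) (γ v) ≤ K * (eVariationOn γ (Set.Icc u v)).toReal :=
    fun u v hu huv hv => key_angle_le hδ0 hδ2 hsph hfin hη
      (fun a ha b hb hab => hUC a ha b hb hab) hu huv hv
  set vv : ℝ → ℝ → ℝ := fun u v => (eVariationOn γ (Set.Icc u v)).toReal with hvv
  have hsubfin : ∀ {u v : ℝ}, 0 ≤ u → v ≤ 1 → eVariationOn γ (Set.Icc u v) ≠ ⊤ :=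
    fun {u v} hu hv =>
      ne_top_of_le_ne_top hfin (eVariationOn.mono γ (Set.Icc_subset_Icc hu hv))
  have vvnonneg : ∀ u v : ℝ, 0 ≤ vv u v := fun u v => ENNReal.toReal_nonneg
  have vadd : ∀ {u w t : ℝ}, 0 ≤ u → u ≤ w → w ≤ t → t ≤ 1 → vv u w + vv w t = vv u t := by
    intro u w t hu huw hwt ht
    have h := eVariationOn.Icc_add_Icc γ (s := Set.Icc (0:ℝ) 1) huw hwt ⟨hu.trans huw, hwt.trans ht⟩
    rw [Set.inter_eq_self_of_subset_right (Set.Icc_subset_Icc hu (hwt.trans ht)),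
        Set.inter_eq_self_of_subset_right (Set.Icc_subset_Icc (hu.trans huw) ht),
        Set.inter_eq_self_of_subset_right (Set.Icc_subset_Icc hu ht)] at h
    simp only [hvv]
    rw [← ENNReal.toReal_add (hsubfin hu (hwt.trans ht)) (hsubfin (hu.trans huw) ht), h]
  set A : Set ℝ := {t | t ∈ Set.Icc (0:ℝ) 1 ∧ vv 0 t ≤ L / 2} with hA
  have hA0 : (0:ℝ) ∈ A := by
    refine ⟨⟨le_rfl, zero_le_one⟩, ?_⟩
    have h0 : eVariationOn γ (Set.Icc (0:ℝ) 0) = 0 := by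
      apply eVariationOn.subsingleton
      rw [Set.Icc_self]
      exact Set.subsingleton_singleton
    simp only [hvv, h0, ENNReal.toReal_zero]
    linarith
  have hAbdd : BddAbove A := ⟨1, fun t ht => ht.1.2⟩
  set s : ℝ := sSup A with hsdef
  have hs0 : 0 ≤ s := le_csSup hAbdd hA0
  have hs1 : s ≤ 1 := csSup_le ⟨0, hA0⟩ (fun t ht => ht.1.2)
  have h1 : ∀ t : ℝ, 0 ≤ t → t < s → vv 0 t ≤ L / 2 := by
    intro t ht hts
    obtain ⟨t', ht'A, htt'⟩ := exists_lt_of_lt_csSup ⟨0, hA0⟩ hts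
    exact (ENNReal.toReal_mono (hsubfin le_rfl ht'A.1.2)
      (eVariationOn.mono γ (Set.Icc_subset_Icc le_rfl htt'.le))).trans ht'A.2
  have hv01 : vv 0 1 = L := rfl
  have h2 : ∀ t : ℝ, s < t → t ≤ 1 → vv t 1 ≤ L / 2 := by
    intro t hst ht
    have htA : t ∉ A := fun h => absurd (le_csSup hAbdd h) (not_le.2 hst)
    have ht0 : 0 ≤ t := hs0.trans hst.le
    have hgt : L / 2 < vv 0 t := by
      by_contra h
      exact htA ⟨⟨ht0, ht⟩, le_of_not_gt h⟩
    have hadd := vadd le_rfl ht0 ht le_rfl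
    rw [hv01] at hadd
    linarith
  have ha : ‖γ 0‖ = 1 := hsph 0 ⟨le_rfl, zero_le_one⟩
  have hb : ‖γ s‖ = 1 := hsph s ⟨hs0, hs1⟩
  have hπm : 0 < π - m := by linarith
  -- arc 1 contradiction
  have harc1 : ∀ t₀ : ℝ, 0 ≤ t₀ → t₀ < s → ⟪γ t₀, γ 0 + γ s⟫ = 0 → False := by
    intro t₀ ht₀ hts h0
    have hx : ‖γ t₀‖ = 1 := hsph t₀ ⟨ht₀, hts.le.trans hs1⟩
    have hrefl := reflect_pi_le ha hb hx h0
    set ε' : ℝ := (π - m) / π with hε'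
    have hε'pos : 0 < ε' := div_pos hπm Real.pi_pos
    obtain ⟨d, hd0, hd⟩ := Metric.continuousWithinAt_iff.1 (hcont s ⟨hs0, hs1⟩) ε' hε'pos
    set s' : ℝ := max t₀ (s - d / 2) with hs'
    have hts' : t₀ ≤ s' := le_max_left _ _
    have hs's : s' < s := max_lt hts (by linarith)
    have hs'0 : 0 ≤ s' := ht₀.trans hts'
    have hs'1 : s' ≤ 1 := hs's.le.trans hs1
    have hds' : dist s' s < d := by
      rw [Real.dist_eq, abs_of_nonpos (by linarith)]
      have := le_max_right t₀ (s - d / 2)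
      linarith
    have hsmall : dist (γ s') (γ s) < ε' := hd ⟨hs'0, hs'1⟩ hds'
    have hangsmall : InnerProductGeometry.angle (γ s') (γ s) < (π - m) / 2 := by
      have h3 := unit_angle_le_pi_half (hsph s' ⟨hs'0, hs'1⟩) hb
      rw [← dist_eq_norm] at h3
      have h4 : π / 2 * dist (γ s') (γ s) < π / 2 * ε' :=
        mul_lt_mul_of_pos_left hsmall (by positivity)
      have h5 : π / 2 * ε' = (π - m) / 2 := by
        rw [hε']; field_simp
      linarith
    have tri : InnerProductGeometry.angle (γ t₀) (γ s) ≤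
        InnerProductGeometry.angle (γ t₀) (γ s') + InnerProductGeometry.angle (γ s') (γ s) :=
      unit_angle_triangle hx (hsph s' ⟨hs'0, hs'1⟩) hb
    have k1 := key 0 t₀ le_rfl ht₀ (hts.le.trans hs1)
    have k2 := key t₀ s' ht₀ hts' hs'1
    have hadd := vadd le_rfl ht₀ hts' hs'1
    have hhalf := h1 s' hs'0 hs's
    have hmul : K * vv 0 s' ≤ K * (L / 2) := mul_le_mul_of_nonneg_left hhalf hK0
    have k1' : InnerProductGeometry.angle (γ 0) (γ t₀) ≤ K * vv 0 t₀ := k1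
    have k2' : InnerProductGeometry.angle (γ t₀) (γ s') ≤ K * vv t₀ s' := k2
    have hksum : K * vv 0 t₀ + K * vv t₀ s' = K * vv 0 s' := by rw [← hadd]; ring
    linarith
  -- arc 2 contradiction
  have harc2 : ∀ t₀ : ℝ, s < t₀ → t₀ ≤ 1 → ⟪γ t₀, γ 0 + γ s⟫ = 0 → False := by
    intro t₀ hst hts h0
    have hx : ‖γ t₀‖ = 1 := hsph t₀ ⟨hs0.trans hst.le, hts⟩
    have hrefl := reflect_pi_le ha hb hx h0
    set ε' : ℝ := (π - m) / π with hε'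
    have hε'pos : 0 < ε' := div_pos hπm Real.pi_pos
    obtain ⟨d, hd0, hd⟩ := Metric.continuousWithinAt_iff.1 (hcont s ⟨hs0, hs1⟩) ε' hε'pos
    set s' : ℝ := min t₀ (s + d / 2) with hs'
    have hts' : s' ≤ t₀ := min_le_left _ _
    have hs's : s < s' := lt_min hst (by linarith)
    have hs'0 : 0 ≤ s' := hs0.trans hs's.le
    have hs'1 : s' ≤ 1 := hts'.trans hts
    have hds' : dist s' s < d := by
      rw [Real.dist_eq, abs_of_nonneg (by linarith)]
      have := min_le_right t₀ (s + d / 2)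
      linarith
    have hsmall : dist (γ s') (γ s) < ε' := hd ⟨hs'0, hs'1⟩ hds'
    have hangsmall : InnerProductGeometry.angle (γ s') (γ s) < (π - m) / 2 := by
      have h3 := unit_angle_le_pi_half (hsph s' ⟨hs'0, hs'1⟩) hb
      rw [← dist_eq_norm] at h3
      have h4 : π / 2 * dist (γ s') (γ s) < π / 2 * ε' :=
        mul_lt_mul_of_pos_left hsmall (by positivity)
      have h5 : π / 2 * ε' = (π - m) / 2 := by rw [hε']; field_simp
      linarith
    have tri : InnerProductGeometry.angle (γ t₀) (γ s) ≤
        InnerProductGeometry.angle (γ t₀) (γ s') + InnerProductGeometry.angle (γ s') (γ s) :=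
      unit_angle_triangle hx (hsph s' ⟨hs'0, hs'1⟩) hb
    have k2 := key s' t₀ hs'0 hts' hts
    have k1 := key t₀ 1 (hs0.trans hst.le) hts le_rfl
    have hca : InnerProductGeometry.angle (γ 0) (γ t₀) = InnerProductGeometry.angle (γ t₀) (γ 1) := by
      rw [hclosed, InnerProductGeometry.angle_comm]
    have hcs' : InnerProductGeometry.angle (γ t₀) (γ s') = InnerProductGeometry.angle (γ s') (γ t₀) :=
      InnerProductGeometry.angle_comm _ _
    have hadd := vadd hs'0 hts' hts le_rfl
    have hhalf := h2 s' hs's hs'1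
    have k1' : InnerProductGeometry.angle (γ t₀) (γ 1) ≤ K * vv t₀ 1 := k1
    have k2' : InnerProductGeometry.angle (γ s') (γ t₀) ≤ K * vv s' t₀ := k2
    have hksum : K * vv s' t₀ + K * vv t₀ 1 = K * vv s' 1 := by rw [← hadd]; ring
    have hmul : K * vv s' 1 ≤ K * (L / 2) := mul_le_mul_of_nonneg_left hhalf hK0
    linarith
  by_cases hw : γ 0 + γ s = 0
  · exfalso
    have hspos : 0 < s := by
      rcases eq_or_lt_of_le hs0 with h | h
      · exfalso
        have hss : γ s = γ 0 := by rw [← h]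
        rw [hss] at hw
        have h2' : γ 0 = 0 := by
          have h3 : (2:ℝ) • γ 0 = 0 := by rw [two_smul]; exact hw
          simpa using h3
        rw [h2'] at ha; simp at ha
      · exact h
    exact harc1 0 le_rfl hspos (by rw [hw, inner_zero_right])
  · have hwnorm : 0 < ‖γ 0 + γ s‖ := norm_pos_iff.2 hw
    refine ⟨‖γ 0 + γ s‖⁻¹ • (γ 0 + γ s), ?_, ?_⟩
    · rw [norm_smul, norm_inv, norm_norm]
      field_simp
    by_contra hcon
    push_neg at hcon
    obtain ⟨t₁, ht₁, ht₁le⟩ := hcon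
    have hgt₁ : ⟪γ t₁, γ 0 + γ s⟫ ≤ 0 := by
      rw [real_inner_smul_right] at ht₁le
      by_contra hpos
      push_neg at hpos
      exact absurd (mul_pos (inv_pos.2 hwnorm) hpos) (not_lt.2 ht₁le)
    have hgcont : ContinuousOn (fun t => ⟪γ t, γ 0 + γ s⟫) (Set.Icc (0:ℝ) 1) :=
      hcont.inner continuousOn_const
    have he2 : ⟪γ 0, γ 0⟫ = (1:ℝ) := by rw [real_inner_self_eq_norm_sq, ha]; norm_num
    have he3 : ⟪γ s, γ s⟫ = (1:ℝ) := by rw [real_inner_self_eq_norm_sq, hb]; norm_num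
    have hexp : ⟪γ 0 + γ s, γ 0 + γ s⟫ = ⟪γ 0, γ 0⟫ + 2 * ⟪γ 0, γ s⟫ + ⟪γ s, γ s⟫ :=
      real_inner_add_add_self _ _
    have hee : ⟪γ 0 + γ s, γ 0 + γ s⟫ = ‖γ 0 + γ s‖ ^ 2 := real_inner_self_eq_norm_sq _
    have hg0 : 0 < ⟪γ 0, γ 0 + γ s⟫ := by
      have hgoal : ⟪γ 0, γ 0 + γ s⟫ = 1 + ⟪γ 0, γ s⟫ := by
        rw [inner_add_right, he2]
      have hsq : 0 < ‖γ 0 + γ s‖ ^ 2 := by positivity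
      linarith [hsq, hee, hexp, he2, he3, hgoal]
    have hgs : 0 < ⟪γ s, γ 0 + γ s⟫ := by
      have hcomm : ⟪γ s, γ 0⟫ = ⟪γ 0, γ s⟫ := real_inner_comm _ _
      have hgoal : ⟪γ s, γ 0 + γ s⟫ = ⟪γ 0, γ s⟫ + 1 := by
        rw [inner_add_right, he3, hcomm]
      have hsq : 0 < ‖γ 0 + γ s‖ ^ 2 := by positivity
      linarith [hsq, hee, hexp, he2, he3, hgoal]
    exfalso
    rcases le_total t₁ s with hcase | hcase
    · have himg := intermediate_value_Icc' ht₁.1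
        (hgcont.mono (Set.Icc_subset_Icc le_rfl (hcase.trans hs1)))
      obtain ⟨t₀, ht₀mem, ht₀⟩ := himg ⟨hgt₁, hg0.le⟩
      have ht₀s : t₀ < s := by
        rcases eq_or_lt_of_le (ht₀mem.2.trans hcase) with h | h
        · exfalso
          have hzero := ht₀
          rw [h] at hzero
          simp only [] at hzero
          linarith
        · exact h
      exact harc1 t₀ ht₀mem.1 ht₀s ht₀
    · have himg := intermediate_value_Icc' hcase
        (hgcont.mono (Set.Icc_subset_Icc hs0 ht₁.2))
      obtain ⟨t₀, ht₀mem, ht₀⟩ := himg ⟨hgt₁, hgs.le⟩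
      have hst₀ : s < t₀ := by
        rcases eq_or_lt_of_le ht₀mem.1 with h | h
        · exfalso
          have hzero := ht₀
          rw [← h] at hzero
          simp only [] at hzero
          linarith
        · exact h
      exact harc2 t₀ hst₀ (ht₀mem.2.trans ht₁.2) ht₀
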